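/- For every n ≥ 2 there is a constant C depending only on n with the following property. Let r₁, …, r_m ≥ 1 be radii, let V > 0 satisfy Σ_{i=1}^m r_i^{n-1} ≤ V, and set R = C·V^{1/(n-1)}. Then there exist points p₁, …, p_m ∈ ℝⁿ such that the closed balls B(p_i, 2r_i) are pairwise disjoint, none of them contains the origin, each is contained in the closed ball of radius R centered at the origin, and their radial projections { R·x/‖x‖ : x ∈ B(p_i, 2r_i) } onto the sphere of radius R are pairwise disjoint. -/

import Mathlib

set_option maxHeartbeats 1000000

open Metric Set
open scoped ENNReal NNReal

noncomputable section

/-- Euclidean space `ℝⁿ`. -/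
abbrev Euc (n : ℕ) := EuclideanSpace ℝ (Fin n)

open MeasureTheory in
/-- Packing lemma: radii `r i ≥ 1` with `∑ r i ^ k ≤ V` admit centers `q i` in the ball of
radius `17 * V ^ (1/k)` that are pairwise at distance more than `8 * (r i + r j)`. -/
lemma pack_lemma (k : ℕ) (hk : 1 ≤ k) (V : ℝ) (hV : 0 < V) :
    ∀ (m : ℕ) (r : Fin m → ℝ), (∀ i, 1 ≤ r i) → (∑ i, r i ^ k) ≤ V →
    ∃ q : Fin m → Euc k,
      (∀ i, ‖q i‖ ≤ 17 * V ^ ((k : ℝ)⁻¹)) ∧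
      (∀ i j, i ≠ j → 8 * (r i + r j) < ‖q i - q j‖) := by
  have hk0 : k ≠ 0 := by omega
  haveI : Nontrivial (Euc k) := by
    refine nontrivial_of_ne (EuclideanSpace.single ⟨0, hk⟩ (1:ℝ)) 0
      (fun h => one_ne_zero (α := ℝ) ?_)
    have := congrArg (fun v : Euc k => v ⟨0, hk⟩) h
    simpa using this
  set L : ℝ := 17 * V ^ ((k : ℝ)⁻¹) with hL
  have hT : (0:ℝ) < V ^ ((k : ℝ)⁻¹) := Real.rpow_pos_of_pos hV _
  have hLpos : 0 < L := by positivity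
  have hLpow : L ^ k = 17 ^ k * V := by
    rw [hL, mul_pow, ← Real.rpow_natCast (V ^ ((k:ℝ)⁻¹)) k, ← Real.rpow_mul hV.le,
      inv_mul_cancel₀ (by exact_mod_cast hk0 : (k:ℝ) ≠ 0), Real.rpow_one]
  intro m
  induction m with
  | zero => exact fun r _ _ => ⟨fun i => 0, fun i => i.elim0, fun i => i.elim0⟩
  | succ m ih =>
    intro r hr hsum
    obtain ⟨i₀, -, hmin⟩ := Finset.exists_min_image Finset.univ r ⟨0, Finset.mem_univ 0⟩
    set r' : Fin m → ℝ := fun j => r (i₀.succAbove j) with hr'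
    have hsum_split : ∑ i, r i ^ k = r i₀ ^ k + ∑ j, r' j ^ k :=
      Fin.sum_univ_succAbove (fun i => r i ^ k) i₀
    have hr0 : ∀ i, (0:ℝ) ≤ r i := fun i => le_trans zero_le_one (hr i)
    have hsum' : ∑ j, r' j ^ k ≤ V := by
      have h1 : (0:ℝ) ≤ r i₀ ^ k := pow_nonneg (hr0 i₀) k
      have h2 := hsum_split ▸ hsum
      linarith
    obtain ⟨q', hq'L, hq'sep⟩ := ih (fun j => r (i₀.succAbove j)) (fun j => hr _) hsum'
    have hvol : ¬ (ball (0 : Euc k) L ⊆ ⋃ j, closedBall (q' j) (16 * r' j)) := by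
      intro hsub
      have hmeas := (measure_mono hsub).trans (measure_iUnion_fintype_le volume _)
      rw [Measure.addHaar_ball volume (0 : Euc k) hLpos.le] at hmeas
      have hcb : ∀ j, volume (closedBall (q' j) (16 * r' j))
          = ENNReal.ofReal ((16 * r' j) ^ Module.finrank ℝ (Euc k))
              * volume (ball (0 : Euc k) 1) :=
        fun j => Measure.addHaar_closedBall volume (q' j)
          (by have := hr0 (i₀.succAbove j); positivity)
      simp only [hcb, ← Finset.sum_mul] at hmeas
      have hB0 : volume (ball (0 : Euc k) 1) ≠ 0 := (measure_ball_pos volume _ one_pos).ne'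
      have hBtop : volume (ball (0 : Euc k) 1) ≠ ⊤ :=
        ((measure_mono ball_subset_closedBall).trans_lt measure_closedBall_lt_top).ne
      rw [ENNReal.mul_le_mul_iff_left hB0 hBtop] at hmeas
      rw [← ENNReal.ofReal_sum_of_nonneg (fun j _ => by
        have := hr0 (i₀.succAbove j); positivity)] at hmeas
      rw [ENNReal.ofReal_le_ofReal_iff (Finset.sum_nonneg fun j _ => by
        have := hr0 (i₀.succAbove j); positivity)] at hmeas
      rw [finrank_euclideanSpace_fin] at hmeas
      have hcontr : ∑ j, (16 * r' j) ^ k ≤ 16 ^ k * V := by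
        simp only [mul_pow, ← Finset.mul_sum]
        exact mul_le_mul_of_nonneg_left hsum' (by positivity)
      have h16 : (16:ℝ) ^ k * V < 17 ^ k * V := by
        have h17 : (16:ℝ) ^ k < 17 ^ k :=
          pow_lt_pow_left₀ (by norm_num) (by norm_num) hk0
        nlinarith
      rw [hLpow] at hmeas
      linarith
    obtain ⟨x, hxball, hxfar⟩ := not_subset.mp hvol
    simp only [mem_iUnion, not_exists, mem_closedBall, not_le] at hxfar
    refine ⟨i₀.insertNth x q', ?_, ?_⟩
    · intro i
      rcases eq_or_ne i i₀ with rfl | hne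
      · rw [Fin.insertNth_apply_same]
        have : dist x 0 < L := mem_ball.mp hxball
        simpa [dist_eq_norm] using this.le
      · obtain ⟨j, rfl⟩ := Fin.exists_succAbove_eq hne
        rw [Fin.insertNth_apply_succAbove]
        exact hq'L j
    · have key : ∀ j : Fin m, 8 * (r i₀ + r (i₀.succAbove j)) < ‖x - q' j‖ := by
        intro j
        have h1 : 16 * r' j < dist x (q' j) := hxfar j
        have h2 : r i₀ ≤ r' j := hmin _ (Finset.mem_univ _)
        rw [dist_eq_norm] at h1
        have : 8 * (r i₀ + r (i₀.succAbove j)) ≤ 16 * r' j := by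
          simp only [hr']
          linarith
        linarith
      intro i j hij
      rcases eq_or_ne i i₀ with rfl | hi
      · obtain ⟨j', rfl⟩ := Fin.exists_succAbove_eq (Ne.symm hij)
        rw [Fin.insertNth_apply_same, Fin.insertNth_apply_succAbove]
        exact key j'
      · obtain ⟨i', rfl⟩ := Fin.exists_succAbove_eq hi
        rcases eq_or_ne j i₀ with rfl | hj
        · rw [Fin.insertNth_apply_same, Fin.insertNth_apply_succAbove, ← norm_neg]
          simpa [add_comm] using key i'
        · obtain ⟨j', rfl⟩ := Fin.exists_succAbove_eq hj
          rw [Fin.insertNth_apply_succAbove, Fin.insertNth_apply_succAbove]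
          exact hq'sep i' j' (fun h => hij (by rw [h]))

/-- Build a point of `Euc k` from a plain function. -/
def mkE {k : ℕ} (f : Fin k → ℝ) : Euc k := (WithLp.equiv 2 (Fin k → ℝ)).symm f

lemma mkE_apply {k : ℕ} (f : Fin k → ℝ) (i : Fin k) : mkE f i = f i := rfl

lemma inner_mkE {k : ℕ} (f g : Fin k → ℝ) : (inner ℝ (mkE f) (mkE g) : ℝ) = ∑ i, f i * g i := by
  simp [PiLp.inner_apply, RCLike.inner_apply, mkE_apply, mul_comm]

lemma inner_cons {k : ℕ} (a b : ℝ) (f g : Euc k) :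
    (inner ℝ (mkE (Fin.cons a (fun j => f j))) (mkE (Fin.cons b (fun j => g j))) : ℝ)
      = a * b + inner ℝ f g := by
  rw [inner_mkE, Fin.sum_univ_succ]
  simp [PiLp.inner_apply, RCLike.inner_apply, mul_comm]

lemma inner_self_sub {E : Type*} [NormedAddCommGroup E] [InnerProductSpace ℝ E] (x y : E) :
    (inner ℝ (x - y) (x - y) : ℝ) = inner ℝ x x - 2 * inner ℝ x y + inner ℝ y y := by
  simp only [inner_sub_left, inner_sub_right]
  rw [real_inner_comm y x]; ring

/-- Packing balls with disjoint radial shadows.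
For every `n ≥ 2` there is a constant `C` depending only on `n` with the following property.
Given radii `r₁, …, r_m ≥ 1` and `V > 0` with `Σ rᵢ^{n-1} ≤ V`, and setting
`R = C·V^{1/(n-1)}`, there are points `p₁, …, p_m ∈ ℝⁿ` such that the closed balls
`B(pᵢ, 2rᵢ)` are pairwise disjoint, avoid the origin, lie in the closed ball of radius `R`
centered at the origin, and have pairwise disjoint radial projections
`{R·x/‖x‖ : x ∈ B(pᵢ, 2rᵢ)}` onto the sphere of radius `R`. -/
theorem statement13 (n : ℕ) (hn : 2 ≤ n) :
    ∃ C : ℝ, 0 < C ∧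
      ∀ (m : ℕ) (r : Fin m → ℝ), (∀ i, 1 ≤ r i) →
        ∀ V : ℝ, 0 < V → (∑ i, r i ^ (n - 1)) ≤ V →
          ∀ R : ℝ, R = C * V ^ (((n : ℝ) - 1)⁻¹) →
            ∃ p : Fin m → Euc n,
              (∀ i j, i ≠ j →
                Disjoint (closedBall (p i) (2 * r i)) (closedBall (p j) (2 * r j))) ∧
              (∀ i, (0 : Euc n) ∉ closedBall (p i) (2 * r i)) ∧
              (∀ i, closedBall (p i) (2 * r i) ⊆ closedBall (0 : Euc n) R) ∧
              (∀ i j, i ≠ j →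
                Disjoint
                  ((fun x : Euc n => (R / ‖x‖) • x) '' closedBall (p i) (2 * r i))
                  ((fun x : Euc n => (R / ‖x‖) • x) '' closedBall (p j) (2 * r j))) := by
  obtain ⟨d, rfl⟩ : ∃ d, n = d + 2 := ⟨n - 2, by omega⟩
  refine ⟨51, by norm_num, ?_⟩
  intro m r hr V hV hsum R hR
  have hsum' : (∑ i, r i ^ (d + 1)) ≤ V := hsum
  obtain ⟨q, hqL, hqsep⟩ := pack_lemma (d + 1) (by omega) V hV m r hr hsum'
  set T : ℝ := V ^ (((d + 1 : ℕ) : ℝ)⁻¹) with hTdef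
  have hT : 0 < T := Real.rpow_pos_of_pos hV _
  set L : ℝ := 17 * T with hLdef
  have hLpos : 0 < L := by positivity
  have hRL : R = 3 * L := by
    have hcast : ((d + 2 : ℕ) : ℝ) - 1 = ((d + 1 : ℕ) : ℝ) := by push_cast; ring
    rw [hR, hcast, hLdef, hTdef]
    ring
  have hrT : ∀ i, r i ≤ T := by
    intro i
    have h1 : r i ^ (d + 1) ≤ V :=
      le_trans (Finset.single_le_sum (f := fun i => r i ^ (d + 1))
        (fun j _ => pow_nonneg (le_trans zero_le_one (hr j)) _) (Finset.mem_univ i)) hsum'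
    calc r i = (r i ^ (d + 1)) ^ (((d + 1 : ℕ) : ℝ)⁻¹) :=
          (Real.pow_rpow_inv_natCast (le_trans zero_le_one (hr i)) (by omega)).symm
      _ ≤ T := Real.rpow_le_rpow (pow_nonneg (le_trans zero_le_one (hr i)) _) h1
          (by positivity)
  have hr0 : ∀ i, (0:ℝ) < r i := fun i => lt_of_lt_of_le one_pos (hr i)
  set p : Fin m → Euc (d + 2) := fun i => mkE (Fin.cons L (fun j => q i j)) with hpdef
  have hinner_pp : ∀ i j, (inner ℝ (p i) (p j) : ℝ) = L * L + inner ℝ (q i) (q j) :=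
    fun i j => inner_cons L L (q i) (q j)
  have hnormp_sq : ∀ i, ‖p i‖ ^ 2 = L ^ 2 + ‖q i‖ ^ 2 := by
    intro i
    rw [← real_inner_self_eq_norm_sq, ← real_inner_self_eq_norm_sq, hinner_pp]
    ring
  have hdist : ∀ i j, dist (p i) (p j) = ‖q i - q j‖ := by
    intro i j
    have h1 : dist (p i) (p j) ^ 2 = ‖q i - q j‖ ^ 2 := by
      rw [dist_eq_norm, ← real_inner_self_eq_norm_sq, ← real_inner_self_eq_norm_sq,
        inner_self_sub, inner_self_sub, hinner_pp, hinner_pp, hinner_pp]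
      ring
    have h2 : (0:ℝ) ≤ dist (p i) (p j) := dist_nonneg
    have h3 : (0:ℝ) ≤ ‖q i - q j‖ := norm_nonneg _
    nlinarith
  have hplow : ∀ i, L ≤ ‖p i‖ := by
    intro i
    have h1 := hnormp_sq i
    have h2 : (0:ℝ) ≤ ‖p i‖ := norm_nonneg _
    nlinarith [sq_nonneg (‖q i‖)]
  have hpup : ∀ i, ‖p i‖ ≤ 3/2 * L := by
    intro i
    have h1 := hnormp_sq i
    have h2 : (0:ℝ) ≤ ‖p i‖ := norm_nonneg _
    have h3 := hqL i
    have h4 : (0:ℝ) ≤ ‖q i‖ := norm_nonneg _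
    nlinarith
  have horig : ∀ i, (0 : Euc (d + 2)) ∉ closedBall (p i) (2 * r i) := by
    intro i hmem
    rw [mem_closedBall, dist_zero_left] at hmem
    have := hplow i
    have := hrT i
    linarith
  refine ⟨p, ?_, horig, ?_, ?_⟩
  · intro i j hij
    apply closedBall_disjoint_closedBall
    rw [hdist]
    have := hqsep i j hij
    have := hr0 i; have := hr0 j
    linarith
  · intro i x hx
    rw [mem_closedBall] at hx
    rw [mem_closedBall, dist_zero_right]
    have h1 := dist_triangle x (p i) 0
    rw [dist_zero_right, dist_zero_right] at h1
    have h2 := hpup i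
    have h3 := hrT i
    rw [hRL]
    linarith
  · intro i j hij
    set u : Euc (d + 1) := q i - q j with hudef
    set t : ℝ := ‖u‖ with htdef
    have ht : 8 * (r i + r j) < t := hqsep i j hij
    have htpos : 0 < t := by have := hr0 i; have := hr0 j; linarith
    set c : ℝ := ((inner ℝ u (q i) : ℝ) + (inner ℝ u (q j) : ℝ)) / 2 with hcdef
    set w : Euc (d + 2) := mkE (Fin.cons (-(c/L)) (fun j' => u j')) with hwdef
    have hinner_wp : ∀ a, (inner ℝ w (p a) : ℝ) = (inner ℝ u (q a) : ℝ) - c := by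
      intro a
      have := inner_cons (-(c/L)) L u (q a)
      rw [hwdef, hpdef]
      rw [this]
      field_simp [hLpos.ne']
      ring
    have hiui : (inner ℝ u (q i) : ℝ) - (inner ℝ u (q j) : ℝ) = t ^ 2 := by
      rw [← inner_sub_right, ← hudef, ← real_inner_self_eq_norm_sq]
    have hwpi : (inner ℝ w (p i) : ℝ) = t ^ 2 / 2 := by
      rw [hinner_wp, hcdef]; linarith
    have hwpj : (inner ℝ w (p j) : ℝ) = -(t ^ 2 / 2) := by
      rw [hinner_wp, hcdef]; linarith
    have hcbound : |c| ≤ t * L := by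
      rw [hcdef]
      have h1 : |(inner ℝ u (q i) : ℝ)| ≤ t * L :=
        le_trans (abs_real_inner_le_norm u (q i))
          (mul_le_mul_of_nonneg_left (hqL i) (norm_nonneg u))
      have h2 : |(inner ℝ u (q j) : ℝ)| ≤ t * L :=
        le_trans (abs_real_inner_le_norm u (q j))
          (mul_le_mul_of_nonneg_left (hqL j) (norm_nonneg u))
      have h3 : |(inner ℝ u (q i) : ℝ) + (inner ℝ u (q j) : ℝ)| ≤ 2 * (t * L) := by
        rw [abs_le] at h1 h2
        rw [abs_le]
        constructor <;> nlinarith [h1.1, h1.2, h2.1, h2.2]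
      rw [abs_div, abs_two]
      linarith
    have hwnorm : ‖w‖ ≤ 2 * t := by
      have h1 : ‖w‖ ^ 2 = (c/L) ^ 2 + t ^ 2 := by
        rw [← real_inner_self_eq_norm_sq, hwdef]
        rw [inner_cons (-(c/L)) (-(c/L)) u u, real_inner_self_eq_norm_sq, ← htdef]
        ring
      have h2 : (c/L) ^ 2 ≤ t ^ 2 := by
        rw [div_pow]
        rw [div_le_iff₀ (by positivity)]
        have := sq_abs c
        nlinarith [hcbound, abs_nonneg c, sq_nonneg (t*L)]
      have h3 : (0:ℝ) ≤ ‖w‖ := norm_nonneg _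
      nlinarith
    have hposi : ∀ x ∈ closedBall (p i) (2 * r i), 0 < (inner ℝ w x : ℝ) := by
      intro x hx
      rw [mem_closedBall, dist_eq_norm] at hx
      have h1 : (inner ℝ w x : ℝ) = (inner ℝ w (p i) : ℝ) + (inner ℝ w (x - p i) : ℝ) := by
        rw [inner_sub_right]; ring
      have h2 : |(inner ℝ w (x - p i) : ℝ)| ≤ (2 * t) * (2 * r i) :=
        le_trans (abs_real_inner_le_norm _ _)
          (mul_le_mul hwnorm hx (norm_nonneg _) (by positivity))
      rw [abs_le] at h2
      rw [h1, hwpi]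
      nlinarith [h2.1, hr0 i, hr0 j]
    have hnegj : ∀ x ∈ closedBall (p j) (2 * r j), (inner ℝ w x : ℝ) < 0 := by
      intro x hx
      rw [mem_closedBall, dist_eq_norm] at hx
      have h1 : (inner ℝ w x : ℝ) = (inner ℝ w (p j) : ℝ) + (inner ℝ w (x - p j) : ℝ) := by
        rw [inner_sub_right]; ring
      have h2 : |(inner ℝ w (x - p j) : ℝ)| ≤ (2 * t) * (2 * r j) :=
        le_trans (abs_real_inner_le_norm _ _)
          (mul_le_mul hwnorm hx (norm_nonneg _) (by positivity))
      rw [abs_le] at h2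
      rw [h1, hwpj]
      nlinarith [h2.2, hr0 i, hr0 j]
    rw [Set.disjoint_left]
    rintro y ⟨x, hx, rfl⟩ ⟨x', hx', heq⟩
    have hxne : x ≠ 0 := fun h => horig i (h ▸ hx)
    have hx'ne : x' ≠ 0 := fun h => horig j (h ▸ hx')
    have hRpos : 0 < R := by rw [hRL]; positivity
    have hy1 : 0 < (inner ℝ w ((R / ‖x‖) • x) : ℝ) := by
      rw [real_inner_smul_right]
      exact mul_pos (div_pos hRpos (norm_pos_iff.mpr hxne)) (hposi x hx)
    have hy2 : (inner ℝ w ((R / ‖x'‖) • x') : ℝ) < 0 := by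
      rw [real_inner_smul_right]
      exact mul_neg_of_pos_of_neg (div_pos hRpos (norm_pos_iff.mpr hx'ne)) (hnegj x' hx')
    have heq' : (R / ‖x'‖) • x' = (R / ‖x‖) • x := heq
    rw [heq'] at hy2
    linarith

end
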